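/- Let d ≥ 2 and Q ≥ 2 be integers with d dividing Q, and let a be an integer with gcd(a, d) = 1. Then R_Q(d; a + rad(Q)) = R_Q(d; a), where rad(Q) = ∏_{p | Q} p is the radical of Q. (Note that gcd(a + rad(Q), d) = 1, since rad(d) divides rad(Q).) -/

import Mathlib

/-- The least positive residue of `n` modulo `Q`: the unique integer in `[1, Q]`
congruent to `n` mod `Q` (for `Q ≥ 1`). -/
def lpr (Q : ℕ) (n : ℤ) : ℤ := (n - 1) % Q + 1

/-- `R*_Q(d;a) = (1/φ(Q)²) Σ_{s,t=1..Q, gcd(st,Q)=1, s ≡ a (mod d)} ⟨t-s⟩_Q`. -/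
def Rstar (Q d : ℕ) (a : ℤ) : ℚ :=
  (1 / (Nat.totient Q : ℚ) ^ 2) *
    ∑ s ∈ Finset.Icc 1 Q, ∑ t ∈ Finset.Icc 1 Q,
      if Nat.gcd (s * t) Q = 1 ∧ (s : ℤ) ≡ a [ZMOD d] then (lpr Q ((t : ℤ) - (s : ℤ)) : ℚ) else 0

/-- `R̄_Q(d) = (1/φ(d)) (Q/φ(Q)) (φ(Q)+1)/2`. -/
def Rbar (Q d : ℕ) : ℚ :=
  (1 / (Nat.totient d : ℚ)) * ((Q : ℚ) / (Nat.totient Q : ℚ)) * (((Nat.totient Q : ℚ) + 1) / 2)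

/-- The bias constant `R_Q(d;a) = R*_Q(d;a) - R̄_Q(d)`. -/
def Rbias (Q d : ℕ) (a : ℤ) : ℚ := Rstar Q d a - Rbar Q d

/-- The radical (maximal square-free divisor) `rad(Q) = ∏_{p ∣ Q, p prime} p`. -/
def radical (d : ℕ) : ℕ := ∏ p ∈ d.primeFactors, p

lemma lpr_congr {Q : ℕ} {n m : ℤ} (h : n ≡ m [ZMOD Q]) : lpr Q n = lpr Q m := by
  have h2 : (n - 1) % (Q : ℤ) = (m - 1) % (Q : ℤ) := h.sub_right 1
  simp [lpr, h2]

lemma sum_Icc_zmod {Q : ℕ} [NeZero Q] (g : ZMod Q → ℚ) :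
    ∑ s ∈ Finset.Icc 1 Q, g (s : ZMod Q) = ∑ x : ZMod Q, g x := by
  have hQ : 0 < Q := Nat.pos_of_ne_zero (NeZero.ne Q)
  refine Finset.sum_nbij' (fun s => ((s : ZMod Q))) (fun x => (x - 1).val + 1)
    (fun s _ => Finset.mem_univ _) ?_ ?_ ?_ (fun s _ => rfl)
  · intro x _
    simp only [Finset.mem_Icc]
    have := ZMod.val_lt (x - 1)
    omega
  · intro s hs
    simp only [Finset.mem_Icc] at hs
    obtain ⟨u, rfl⟩ : ∃ u, s = u + 1 := ⟨s - 1, by omega⟩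
    have h1 : ((u + 1 : ℕ) : ZMod Q) - 1 = (u : ZMod Q) := by push_cast; ring
    show (((u + 1 : ℕ) : ZMod Q) - 1).val + 1 = u + 1
    rw [h1, ZMod.val_natCast, Nat.mod_eq_of_lt (by omega)]
  · intro x _
    push_cast
    simp [ZMod.natCast_val, ZMod.cast_id]

lemma radical_nilpotent {Q : ℕ} [NeZero Q] : IsNilpotent ((radical Q : ZMod Q)) := by
  refine ⟨Q, ?_⟩
  rw [← Nat.cast_pow, ZMod.natCast_eq_zero_iff]
  rw [Nat.dvd_iff_prime_pow_dvd_dvd]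
  intro p k hp hpk
  rcases Nat.eq_zero_or_pos k with hk | hk
  · simp [hk]
  have hQ : 0 < Q := Nat.pos_of_ne_zero (NeZero.ne Q)
  have hp' : p.Prime := hp
  have hpQ : p ∣ Q := (dvd_pow_self p hk.ne').trans hpk
  have hmem : p ∈ Q.primeFactors := Nat.mem_primeFactors.mpr ⟨hp', hpQ, hQ.ne'⟩
  have hpr : p ∣ radical Q := Finset.dvd_prod_of_mem _ hmem
  have hkQ : k ≤ Q := by
    have h1 : p ^ k ≤ Q := Nat.le_of_dvd hQ hpk
    have h2 : k < p ^ k := Nat.lt_pow_self (n := k) hp'.one_lt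
    omega
  exact (pow_dvd_pow_of_dvd hpr k).trans (pow_dvd_pow _ hkQ)

/-- `R_Q(d; a + rad Q) = R_Q(d; a)`. -/
theorem bias_add_radical (d Q : ℕ) (hd : 2 ≤ d) (hQ : 2 ≤ Q) (hdQ : d ∣ Q)
    (a : ℤ) (ha : Int.gcd a d = 1) :
    Rbias Q d (a + (radical Q : ℤ)) = Rbias Q d a := by
  haveI : NeZero Q := ⟨by omega⟩
  unfold Rbias Rstar
  congr 2
  set r : ℕ := radical Q with hr
  have key : ∀ (a' : ℤ) (s t : ℕ),
      (if Nat.gcd (s * t) Q = 1 ∧ (s : ℤ) ≡ a' [ZMOD d] then (lpr Q ((t : ℤ) - (s : ℤ)) : ℚ) else 0)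
      = (if IsUnit ((s : ZMod Q)) ∧ IsUnit ((t : ZMod Q)) ∧
            (ZMod.castHom hdQ (ZMod d)) ((s : ZMod Q)) = (a' : ZMod d)
          then (lpr Q ((((t : ZMod Q)).val : ℤ) - (((s : ZMod Q)).val : ℤ)) : ℚ) else 0) := by
    intro a' s t
    have h2 : (ZMod.castHom hdQ (ZMod d)) ((s : ZMod Q)) = (s : ZMod d) := by
      simp [ZMod.castHom_apply, ZMod.cast_natCast hdQ]
    have hcond : (Nat.gcd (s * t) Q = 1 ∧ (s : ℤ) ≡ a' [ZMOD d]) ↔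
        (IsUnit ((s : ZMod Q)) ∧ IsUnit ((t : ZMod Q)) ∧
          (ZMod.castHom hdQ (ZMod d)) ((s : ZMod Q)) = (a' : ZMod d)) := by
      rw [ZMod.isUnit_iff_coprime, ZMod.isUnit_iff_coprime, h2]
      have h1 : Nat.gcd (s * t) Q = 1 ↔ (Nat.Coprime s Q ∧ Nat.Coprime t Q) :=
        Nat.coprime_mul_iff_left
      have h3 : ((s : ℤ) ≡ a' [ZMOD d]) ↔ ((s : ZMod d) = (a' : ZMod d)) := by
        rw [← ZMod.intCast_eq_intCast_iff]
        push_cast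
        rfl
      rw [h1, h3]; tauto
    by_cases h : Nat.gcd (s * t) Q = 1 ∧ (s : ℤ) ≡ a' [ZMOD d]
    · rw [if_pos h, if_pos (hcond.mp h)]
      congr 1
      apply lpr_congr
      rw [← ZMod.intCast_eq_intCast_iff]
      push_cast
      simp [ZMod.natCast_val, ZMod.cast_id]
    · rw [if_neg h, if_neg (fun hc => h (hcond.mpr hc))]
  have transfer : ∀ a' : ℤ,
      (∑ s ∈ Finset.Icc 1 Q, ∑ t ∈ Finset.Icc 1 Q,
        if Nat.gcd (s * t) Q = 1 ∧ (s : ℤ) ≡ a' [ZMOD d] then (lpr Q ((t : ℤ) - (s : ℤ)) : ℚ) else 0)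
      = ∑ x : ZMod Q, ∑ y : ZMod Q,
        if IsUnit x ∧ IsUnit y ∧ (ZMod.castHom hdQ (ZMod d)) x = (a' : ZMod d)
          then (lpr Q ((y.val : ℤ) - (x.val : ℤ)) : ℚ) else 0 := by
    intro a'
    rw [← sum_Icc_zmod (g := fun x : ZMod Q => ∑ y : ZMod Q,
        if IsUnit x ∧ IsUnit y ∧ (ZMod.castHom hdQ (ZMod d)) x = (a' : ZMod d)
          then (lpr Q ((y.val : ℤ) - (x.val : ℤ)) : ℚ) else 0)]
    refine Finset.sum_congr rfl fun s _ => ?_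
    rw [← sum_Icc_zmod (g := fun y : ZMod Q =>
        if IsUnit ((s : ZMod Q)) ∧ IsUnit y ∧
            (ZMod.castHom hdQ (ZMod d)) ((s : ZMod Q)) = (a' : ZMod d)
          then (lpr Q ((y.val : ℤ) - (((s : ZMod Q)).val : ℤ)) : ℚ) else 0)]
    exact Finset.sum_congr rfl fun t _ => key a' s t
  rw [transfer, transfer]
  have hnil : IsNilpotent ((r : ZMod Q)) := radical_nilpotent
  have hunit : ∀ x : ZMod Q, IsUnit (x + (r : ZMod Q)) ↔ IsUnit x := by
    intro x
    constructor
    · intro h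
      have := hnil.neg.isUnit_add_left_of_commute h (Commute.all _ _)
      simpa using this
    · intro h
      exact hnil.isUnit_add_left_of_commute h (Commute.all _ _)
  have hcastr : (ZMod.castHom hdQ (ZMod d)) ((r : ZMod Q)) = (r : ZMod d) := by
    simp [ZMod.castHom_apply, ZMod.cast_natCast hdQ]
  refine (Fintype.sum_bijective (fun x : ZMod Q => x + (r : ZMod Q))
    (Equiv.addRight ((r : ZMod Q)) : ZMod Q ≃ ZMod Q).bijective _ _ fun x => ?_).symm
  refine Fintype.sum_bijective (fun y : ZMod Q => y + (r : ZMod Q))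
    (Equiv.addRight ((r : ZMod Q)) : ZMod Q ≃ ZMod Q).bijective _ _ fun y => ?_
  have hcond : (IsUnit x ∧ IsUnit y ∧ (ZMod.castHom hdQ (ZMod d)) x = (a : ZMod d)) ↔
      (IsUnit (x + (r : ZMod Q)) ∧ IsUnit (y + (r : ZMod Q)) ∧
        (ZMod.castHom hdQ (ZMod d)) (x + (r : ZMod Q)) = ((a + (r : ℤ) : ℤ) : ZMod d)) := by
    rw [hunit, hunit, map_add, hcastr]
    have : ((a + (r : ℤ) : ℤ) : ZMod d) = (a : ZMod d) + (r : ZMod d) := by push_cast; rfl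
    rw [this]
    constructor
    · rintro ⟨h1, h2, h3⟩; exact ⟨h1, h2, by rw [h3]⟩
    · rintro ⟨h1, h2, h3⟩; exact ⟨h1, h2, by exact add_right_cancel h3⟩
  by_cases h : IsUnit x ∧ IsUnit y ∧ (ZMod.castHom hdQ (ZMod d)) x = (a : ZMod d)
  · rw [if_pos h, if_pos (hcond.mp h)]
    congr 1
    apply lpr_congr
    rw [← ZMod.intCast_eq_intCast_iff]
    push_cast
    simp only [ZMod.natCast_val, ZMod.cast_id]
    ring
  · rw [if_neg h, if_neg (fun hc => h (hcond.mpr hc))]
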